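/- arXiv:1701.02404 — 3 statements merged into one kernel-verified Lean document; each statement's English description precedes it below -/
import Mathlib

section
/- Cauchy-Schwarz inequality for tensors with factor min(r,n) (Proposition 2.1 / Remark 2.2): for any complex r×n matrices S = (s_{ℓ,k}) and T = (t_{ℓ,k}) one has |∑_{ℓ=1}^{r} ∑_{k=1}^{n} s_{ℓ,k} t_{ℓ,k}|² ≤ min(r,n) · ∑_{m=1}^{r} ∑_{ℓ=1}^{r} |∑_{k=1}^{n} s_{m,k} t_{ℓ,k}|². -/
/-- Cauchy-Schwarz inequality for tensors with factor `min r n` (Proposition 2.1 /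
Remark 2.2): for complex `r × n` matrices `S`, `T`,
`|∑_{ℓ,k} s_{ℓ,k} t_{ℓ,k}|² ≤ min(r,n) · ∑_{m,ℓ} |∑_k s_{m,k} t_{ℓ,k}|²`. -/
theorem stmt_0 (r n : ℕ) (hr : 0 < r) (hn : 0 < n)
    (S T : Matrix (Fin r) (Fin n) ℂ) :
    ‖∑ ℓ : Fin r, ∑ k : Fin n, S ℓ k * T ℓ k‖ ^ 2 ≤
      ((min r n : ℕ) : ℝ) *
        ∑ m : Fin r, ∑ ℓ : Fin r,
          ‖∑ k : Fin n, S m k * T ℓ k‖ ^ 2 := by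
  classical
  set v : Fin n → EuclideanSpace ℂ (Fin r) := fun k => WithLp.toLp 2 (fun m => S m k) with hv
  set w : Fin r → EuclideanSpace ℂ (Fin r) := fun ℓ => WithLp.toLp 2 (fun m => ∑ k, S m k * T ℓ k) with hw
  set V : Submodule ℂ (EuclideanSpace ℂ (Fin r)) := Submodule.span ℂ (Set.range v) with hV
  have hwV : ∀ ℓ, w ℓ ∈ V := by
    intro ℓ
    have hwe : w ℓ = ∑ k, T ℓ k • v k := by
      ext m
      rw [WithLp.ofLp_sum, Finset.sum_apply]
      simp [hw, hv, PiLp.smul_apply, smul_eq_mul, mul_comm]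
    rw [hwe]
    exact Submodule.sum_mem _ fun k _ =>
      Submodule.smul_mem _ _ (Submodule.subset_span ⟨k, rfl⟩)
  set d := Module.finrank ℂ V with hd
  have hdr : d ≤ r := by
    have := Submodule.finrank_le V
    simpa [finrank_euclideanSpace_fin] using this
  have hdn : d ≤ n := by
    have := finrank_range_le_card (R := ℂ) v
    simpa [Set.finrank, hd, hV] using this
  set b := stdOrthonormalBasis ℂ V with hb
  set w' : Fin r → V := fun ℓ => ⟨w ℓ, hwV ℓ⟩ with hw'
  have hexp : ∀ ℓ m, w ℓ m = ∑ i, b.repr (w' ℓ) i * (b i : EuclideanSpace ℂ (Fin r)) m := by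
    intro ℓ m
    have h1 : ((∑ i, b.repr (w' ℓ) i • b i : V) : EuclideanSpace ℂ (Fin r)) = w ℓ := by
      rw [b.sum_repr (w' ℓ)]
    rw [← h1, AddSubmonoidClass.coe_finset_sum, WithLp.ofLp_sum, Finset.sum_apply]
    simp [PiLp.smul_apply, smul_eq_mul]
  set c : Fin r → Fin d → ℝ := fun ℓ i => ‖b.repr (w' ℓ) i‖ with hc
  set u : Fin r → Fin d → ℝ := fun ℓ i => ‖(b i : EuclideanSpace ℂ (Fin r)) ℓ‖ with hu
  have htr : (∑ ℓ : Fin r, ∑ k : Fin n, S ℓ k * T ℓ k) =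
      ∑ ℓ : Fin r, ∑ i, b.repr (w' ℓ) i * (b i : EuclideanSpace ℂ (Fin r)) ℓ :=
    Finset.sum_congr rfl fun ℓ _ => hexp ℓ ℓ
  have habs : ‖∑ ℓ : Fin r, ∑ k : Fin n, S ℓ k * T ℓ k‖ ≤
      ∑ ℓ : Fin r, ∑ i, c ℓ i * u ℓ i := by
    rw [htr]
    refine (norm_sum_le _ _).trans (Finset.sum_le_sum fun ℓ _ => ?_)
    refine (norm_sum_le _ _).trans (Finset.sum_le_sum fun i _ => ?_)
    rw [norm_mul]
  have hCS : (∑ ℓ : Fin r, ∑ i, c ℓ i * u ℓ i) ^ 2 ≤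
      (∑ ℓ : Fin r, ∑ i, c ℓ i ^ 2) * (∑ ℓ : Fin r, ∑ i, u ℓ i ^ 2) := by
    have := Finset.sum_mul_sq_le_sq_mul_sq Finset.univ
      (fun p : Fin r × Fin d => c p.1 p.2) (fun p => u p.1 p.2)
    simpa [Fintype.sum_prod_type] using this
  have hPar : ∀ ℓ, (∑ i, c ℓ i ^ 2) =
      ∑ m, ‖∑ k : Fin n, S m k * T ℓ k‖ ^ 2 := by
    intro ℓ
    have h1 : ∑ i, c ℓ i ^ 2 = ‖b.repr (w' ℓ)‖ ^ 2 := by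
      rw [PiLp.norm_sq_eq_of_L2]
    have h2 : ‖b.repr (w' ℓ)‖ = ‖w' ℓ‖ := b.repr.norm_map _
    have h3 : ‖w' ℓ‖ = ‖w ℓ‖ := rfl
    rw [h1, h2, h3, PiLp.norm_sq_eq_of_L2]
  have hu1 : (∑ ℓ : Fin r, ∑ i, u ℓ i ^ 2) = (d : ℝ) := by
    rw [Finset.sum_comm]
    have hone : ∀ i, (∑ ℓ : Fin r, u ℓ i ^ 2) = 1 := by
      intro i
      have hb1 : ‖(b i : EuclideanSpace ℂ (Fin r))‖ = 1 := by
        rw [Submodule.norm_coe]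
        exact b.orthonormal.1 i
      have h4 : ‖(b i : EuclideanSpace ℂ (Fin r))‖ ^ 2 =
          ∑ ℓ : Fin r, ‖(b i : EuclideanSpace ℂ (Fin r)) ℓ‖ ^ 2 :=
        PiLp.norm_sq_eq_of_L2 _ _
      rw [hb1, one_pow] at h4
      simp only [hu] at h4 ⊢
      exact h4.symm
    simp [hone]
  have hAnn : (0:ℝ) ≤ ∑ ℓ : Fin r, ∑ m, ‖∑ k : Fin n, S m k * T ℓ k‖ ^ 2 :=
    Finset.sum_nonneg fun _ _ => Finset.sum_nonneg fun _ _ => sq_nonneg _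
  calc ‖∑ ℓ : Fin r, ∑ k : Fin n, S ℓ k * T ℓ k‖ ^ 2
      ≤ (∑ ℓ : Fin r, ∑ i, c ℓ i * u ℓ i) ^ 2 :=
        pow_le_pow_left₀ (norm_nonneg _) habs 2
    _ ≤ (∑ ℓ : Fin r, ∑ i, c ℓ i ^ 2) * (∑ ℓ : Fin r, ∑ i, u ℓ i ^ 2) := hCS
    _ = (∑ ℓ : Fin r, ∑ m, ‖∑ k : Fin n, S m k * T ℓ k‖ ^ 2) * (d : ℝ) := by
        rw [hu1]
        congr 1
        exact Finset.sum_congr rfl fun ℓ _ => hPar ℓ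
    _ ≤ ((min r n : ℕ) : ℝ) *
        ∑ m : Fin r, ∑ ℓ : Fin r, ‖∑ k : Fin n, S m k * T ℓ k‖ ^ 2 := by
        rw [mul_comm, Finset.sum_comm]
        refine mul_le_mul_of_nonneg_right ?_ ?_
        · exact_mod_cast le_min hdr hdn
        · rw [Finset.sum_comm]; exact hAnn
end

section
/- Cauchy-Schwarz inequality for more general tensors in indexed form (Proposition 7.1 / Remark 7.2; Skoda's Lemme 1): for any a = (a_1,…,a_p) ∈ ℂ^p and any complex p×n matrices B = (b_{ℓ,k}) and C = (c_{ℓ,k}), with q = min(n, p−1), one has |∑_{j=1}^{p} ∑_{ℓ=1}^{p} ∑_{k=1}^{n} conj(a_j)·(a_j b_{ℓ,k} − a_ℓ b_{j,k})·c_{ℓ,k}|² ≤ q · (∑_{j=1}^{p} |a_j|²) · ∑_{ℓ=1}^{p} ∑_{1≤m<j≤p} |∑_{k=1}^{n} (a_m b_{j,k} − a_j b_{m,k})·c_{ℓ,k}|². -/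
open Finset

lemma half_sum {p : ℕ} (X : Fin p → Fin p → ℝ) (hsymm : ∀ m j, X m j = X j m)
    (hdiag : ∀ j, X j j = 0) :
    2 * ∑ j : Fin p, ∑ m ∈ Finset.univ.filter (fun m => m < j), X m j
      = ∑ j : Fin p, ∑ m : Fin p, X m j := by
  classical
  have hswap : ∑ j : Fin p, ∑ m ∈ Finset.univ.filter (fun m => m < j), X m j
      = ∑ j : Fin p, ∑ m ∈ Finset.univ.filter (fun m => j < m), X m j := by
    rw [Finset.sum_sigma', Finset.sum_sigma']
    refine Finset.sum_nbij' (fun z => ⟨z.2, z.1⟩) (fun z => ⟨z.2, z.1⟩) ?_ ?_ ?_ ?_ ?_ <;>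
      simp +contextual [hsymm]
  have hins : ∀ j : Fin p, (Finset.univ.filter (fun m => ¬ m < j))
      = insert j (Finset.univ.filter (fun m : Fin p => j < m)) := by
    intro j
    ext m
    simp only [Finset.mem_filter, Finset.mem_univ, true_and, Finset.mem_insert, not_lt]
    constructor
    · intro hle
      rcases eq_or_lt_of_le hle with h | h
      · exact Or.inl h.symm
      · exact Or.inr h
    · rintro (rfl | h)
      · exact le_refl _
      · exact le_of_lt h
  have := Finset.sum_congr rfl fun j (_ : j ∈ (univ : Finset (Fin p))) =>
    (Finset.sum_filter_add_sum_filter_not univ (fun m => m < j) (fun m => X m j)).symm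
  calc 2 * ∑ j : Fin p, ∑ m ∈ Finset.univ.filter (fun m => m < j), X m j
      = (∑ j : Fin p, ∑ m ∈ Finset.univ.filter (fun m => m < j), X m j)
        + ∑ j : Fin p, ∑ m ∈ Finset.univ.filter (fun m => j < m), X m j := by
        rw [← hswap]; ring
    _ = ∑ j : Fin p, ((∑ m ∈ Finset.univ.filter (fun m => m < j), X m j)
        + ∑ m ∈ Finset.univ.filter (fun m => j < m), X m j) := by
        rw [Finset.sum_add_distrib]
    _ = ∑ j : Fin p, ∑ m : Fin p, X m j := by
        refine Finset.sum_congr rfl fun j _ => ?_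
        rw [← Finset.sum_filter_add_sum_filter_not univ (fun m => m < j) (fun m => X m j),
          hins j, Finset.sum_insert (by simp), hdiag j, zero_add]

lemma lagrange_identity {p : ℕ} (a g : Fin p → ℂ) :
    ∑ j : Fin p, ∑ m ∈ Finset.univ.filter (fun m => m < j),
        Complex.normSq (a m * g j - a j * g m)
      = (∑ j, Complex.normSq (a j)) * (∑ j, Complex.normSq (g j))
        - Complex.normSq (∑ j, (starRingEnd ℂ) (a j) * g j) := by
  have hcross : ∑ j : Fin p, ∑ m : Fin p, ((a m * g j) * (starRingEnd ℂ) (a j * g m)).re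
      = Complex.normSq (∑ j, (starRingEnd ℂ) (a j) * g j) := by
    have h1 : ∑ j : Fin p, ∑ m : Fin p, ((a m * g j) * (starRingEnd ℂ) (a j * g m))
        = (∑ j, (starRingEnd ℂ) (a j) * g j) * (∑ m, a m * (starRingEnd ℂ) (g m)) := by
      rw [Finset.sum_mul_sum]
      refine Finset.sum_congr rfl fun j _ => Finset.sum_congr rfl fun m _ => ?_
      simp only [map_mul]
      ring
    have h2 : (∑ m, a m * (starRingEnd ℂ) (g m))
        = (starRingEnd ℂ) (∑ j, (starRingEnd ℂ) (a j) * g j) := by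
      rw [map_sum]
      refine Finset.sum_congr rfl fun j _ => ?_
      simp only [map_mul, RingHomCompTriple.comp_apply, Complex.conj_conj, RingHom.id_apply]
      try ring
    calc ∑ j : Fin p, ∑ m : Fin p, ((a m * g j) * (starRingEnd ℂ) (a j * g m)).re
        = (∑ j : Fin p, ∑ m : Fin p, ((a m * g j) * (starRingEnd ℂ) (a j * g m))).re := by
          rw [Complex.re_sum]
          refine Finset.sum_congr rfl fun j _ => ?_
          rw [Complex.re_sum]
      _ = Complex.normSq (∑ j, (starRingEnd ℂ) (a j) * g j) := by
          rw [h1, h2, Complex.mul_conj, Complex.ofReal_re]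
  have hfull : ∑ j : Fin p, ∑ m : Fin p, Complex.normSq (a m * g j - a j * g m)
      = 2 * ((∑ j, Complex.normSq (a j)) * (∑ j, Complex.normSq (g j))
        - Complex.normSq (∑ j, (starRingEnd ℂ) (a j) * g j)) := by
    have expand : ∀ j m : Fin p, Complex.normSq (a m * g j - a j * g m)
        = Complex.normSq (a m) * Complex.normSq (g j)
          + Complex.normSq (a j) * Complex.normSq (g m)
          - 2 * ((a m * g j) * (starRingEnd ℂ) (a j * g m)).re := by
      intro j m
      rw [Complex.normSq_sub, Complex.normSq_mul, Complex.normSq_mul]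
    calc ∑ j : Fin p, ∑ m : Fin p, Complex.normSq (a m * g j - a j * g m)
        = ∑ j : Fin p, ((∑ m, Complex.normSq (a m)) * Complex.normSq (g j)
            + Complex.normSq (a j) * (∑ m, Complex.normSq (g m))
            - 2 * ∑ m, ((a m * g j) * (starRingEnd ℂ) (a j * g m)).re) := by
          refine Finset.sum_congr rfl fun j _ => ?_
          rw [Finset.sum_congr rfl fun m _ => expand j m, Finset.sum_sub_distrib,
            Finset.sum_add_distrib, ← Finset.sum_mul, ← Finset.mul_sum, ← Finset.mul_sum]
      _ = (∑ m, Complex.normSq (a m)) * (∑ j, Complex.normSq (g j))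
            + (∑ j, Complex.normSq (a j)) * (∑ m, Complex.normSq (g m))
            - 2 * ∑ j : Fin p, ∑ m : Fin p, ((a m * g j) * (starRingEnd ℂ) (a j * g m)).re := by
          rw [Finset.sum_sub_distrib, Finset.sum_add_distrib, ← Finset.mul_sum,
            ← Finset.sum_mul, ← Finset.mul_sum]
      _ = 2 * ((∑ j, Complex.normSq (a j)) * (∑ j, Complex.normSq (g j))
            - Complex.normSq (∑ j, (starRingEnd ℂ) (a j) * g j)) := by
          rw [hcross]; ring
  have hh := half_sum (fun m j => Complex.normSq (a m * g j - a j * g m))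
    (fun m j => by rw [← Complex.normSq_neg, neg_sub])
    (fun j => by simp)
  rw [hfull] at hh
  linarith

local notation "⟪" x ", " y "⟫" => @inner ℂ _ _ x y

lemma skoda_key {p : ℕ} (W : Submodule ℂ (EuclideanSpace ℂ (Fin p)))
    (h : Fin p → EuclideanSpace ℂ (Fin p)) (hmem : ∀ ℓ, h ℓ ∈ W) :
    ‖∑ ℓ, h ℓ ℓ‖ ^ 2 ≤ (Module.finrank ℂ W : ℝ) * ∑ ℓ, ‖h ℓ‖ ^ 2 := by
  classical
  set d := Module.finrank ℂ W with hd
  let f : OrthonormalBasis (Fin d) ℂ W := stdOrthonormalBasis ℂ W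
  let F : Fin d → EuclideanSpace ℂ (Fin p) := fun i => (f i : EuclideanSpace ℂ (Fin p))
  have hFo : Orthonormal ℂ F := f.orthonormal.comp_linearIsometry W.subtypeₗᵢ
  have hrepr : ∀ ℓ, h ℓ = ∑ i, ⟪F i, h ℓ⟫ • F i := by
    intro ℓ
    have h1 := f.sum_repr ⟨h ℓ, hmem ℓ⟩
    have h2 : ((∑ i : Fin d, f.repr ⟨h ℓ, hmem ℓ⟩ i • f i : W) : EuclideanSpace ℂ (Fin p))
        = h ℓ := by rw [h1]
    conv_lhs => rw [← h2]
    rw [Submodule.coe_sum]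
    refine Finset.sum_congr rfl fun i _ => ?_
    rw [f.repr_apply_apply]
    rfl
  have hcoord : ∀ ℓ, h ℓ ℓ = ∑ i, ⟪F i, h ℓ⟫ * F i ℓ := by
    intro ℓ
    conv_lhs => rw [hrepr ℓ]
    rw [WithLp.ofLp_sum, Finset.sum_apply]
    rfl
  have habs : ‖∑ ℓ, h ℓ ℓ‖
      ≤ ∑ ℓ, ∑ i, ‖⟪F i, h ℓ⟫‖ * ‖F i ℓ‖ := by
    calc ‖∑ ℓ, h ℓ ℓ‖ = ‖∑ ℓ, ∑ i, ⟪F i, h ℓ⟫ * F i ℓ‖ := by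
          rw [Finset.sum_congr rfl fun ℓ _ => hcoord ℓ]
      _ ≤ ∑ ℓ, ‖∑ i, ⟪F i, h ℓ⟫ * F i ℓ‖ := norm_sum_le _ _
      _ ≤ ∑ ℓ, ∑ i, ‖⟪F i, h ℓ⟫‖ * ‖F i ℓ‖ := by
          refine Finset.sum_le_sum fun ℓ _ => ?_
          refine (norm_sum_le _ _).trans ?_
          refine Finset.sum_le_sum fun i _ => ?_
          rw [norm_mul]
  have key := Finset.sum_mul_sq_le_sq_mul_sq (univ : Finset (Fin p × Fin d))
      (fun z => ‖⟪F z.2, h z.1⟫‖) (fun z => ‖F z.2 z.1‖)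
  have hsplit : ∀ (G : Fin p → Fin d → ℝ),
      ∑ z : Fin p × Fin d, G z.1 z.2 = ∑ ℓ, ∑ i, G ℓ i := by
    intro G
    rw [← Finset.univ_product_univ, Finset.sum_product]
  have hBessel : ∑ z : Fin p × Fin d, ‖⟪F z.2, h z.1⟫‖ ^ 2 ≤ ∑ ℓ, ‖h ℓ‖ ^ 2 := by
    rw [hsplit fun ℓ i => ‖⟪F i, h ℓ⟫‖ ^ 2]
    refine Finset.sum_le_sum fun ℓ _ => ?_
    have := hFo.sum_inner_products_le (h ℓ) (s := univ)
    simpa using this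
  have hnormsq : ∀ (x : EuclideanSpace ℂ (Fin p)), ∑ ℓ, ‖x ℓ‖ ^ 2 = ‖x‖ ^ 2 := by
    intro x
    rw [EuclideanSpace.norm_eq, Real.sq_sqrt (by positivity)]
  have hF : ∑ z : Fin p × Fin d, ‖F z.2 z.1‖ ^ 2 = (d : ℝ) := by
    rw [hsplit fun ℓ i => ‖F i ℓ‖ ^ 2, Finset.sum_comm]
    have : ∀ i : Fin d, ∑ ℓ, ‖F i ℓ‖ ^ 2 = 1 := by
      intro i
      rw [hnormsq (F i), hFo.1 i]
      norm_num
    simp [this]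
  calc ‖∑ ℓ, h ℓ ℓ‖ ^ 2
      ≤ (∑ ℓ, ∑ i, ‖⟪F i, h ℓ⟫‖ * ‖F i ℓ‖) ^ 2 := by
        apply pow_le_pow_left₀ (norm_nonneg _) habs
    _ = (∑ z : Fin p × Fin d, ‖⟪F z.2, h z.1⟫‖ * ‖F z.2 z.1‖) ^ 2 := by
        rw [hsplit fun ℓ i => ‖⟪F i, h ℓ⟫‖ * ‖F i ℓ‖]
    _ ≤ (∑ z : Fin p × Fin d, ‖⟪F z.2, h z.1⟫‖ ^ 2)
        * ∑ z : Fin p × Fin d, ‖F z.2 z.1‖ ^ 2 := key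
    _ ≤ (∑ ℓ, ‖h ℓ‖ ^ 2) * (d : ℝ) := by
        rw [hF]
        refine mul_le_mul_of_nonneg_right hBessel (Nat.cast_nonneg _)
    _ = (d : ℝ) * ∑ ℓ, ‖h ℓ‖ ^ 2 := mul_comm _ _

/-- Cauchy-Schwarz inequality for more general tensors, indexed form (Proposition 7.1 /
Remark 7.2; Skoda's Lemme 1): for `a ∈ ℂ^p` and complex `p × n` matrices `B`, `C`,
with `q = min(n, p−1)`,
`|∑_{j,ℓ,k} conj(a_j)(a_j b_{ℓ,k} − a_ℓ b_{j,k}) c_{ℓ,k}|²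
  ≤ q (∑_j |a_j|²) ∑_ℓ ∑_{m<j} |∑_k (a_m b_{j,k} − a_j b_{m,k}) c_{ℓ,k}|²`. -/
theorem stmt_4 (p n : ℕ) (hp : 2 ≤ p) (hn : 0 < n)
    (a : Fin p → ℂ) (B C : Matrix (Fin p) (Fin n) ℂ) :
    (‖∑ j : Fin p, ∑ ℓ : Fin p, ∑ k : Fin n,
        (starRingEnd ℂ) (a j) * (a j * B ℓ k - a ℓ * B j k) * C ℓ k‖) ^ 2 ≤
      ((min n (p - 1) : ℕ) : ℝ) * (∑ j : Fin p, (‖a j‖) ^ 2) *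
        ∑ ℓ : Fin p, ∑ j : Fin p, ∑ m ∈ Finset.univ.filter (fun m : Fin p => m < j),
          (‖∑ k : Fin n,
            (a m * B j k - a j * B m k) * C ℓ k‖) ^ 2 := by
  classical
  by_cases ha : a = 0
  · subst ha
    simp
  -- abbreviations
  set A2r : ℝ := ∑ j, Complex.normSq (a j) with hA2r
  set g : Fin p → Fin p → ℂ := fun ℓ j => ∑ k, B j k * C ℓ k with hg
  set t : Fin p → ℂ := fun ℓ => ∑ j, (starRingEnd ℂ) (a j) * g ℓ j with ht
  set s : Fin n → ℂ := fun k => ∑ j, (starRingEnd ℂ) (a j) * B j k with hs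
  have hA2 : (∑ j, (starRingEnd ℂ) (a j) * a j) = (A2r : ℂ) := by
    rw [hA2r]
    push_cast
    exact Finset.sum_congr rfl fun j _ => Complex.normSq_eq_conj_mul_self.symm
  set h : Fin p → EuclideanSpace ℂ (Fin p) :=
    (fun ℓ => WithLp.toLp 2 (fun j => (A2r : ℂ) * g ℓ j - t ℓ * a j)) with hh
  set w : Fin n → EuclideanSpace ℂ (Fin p) :=
    (fun k => WithLp.toLp 2 (fun j => (A2r : ℂ) * B j k - s k * a j)) with hw
  set W : Submodule ℂ (EuclideanSpace ℂ (Fin p)) := Submodule.span ℂ (Set.range w) with hW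
  -- t in terms of s
  have htl : ∀ ℓ, t ℓ = ∑ k, s k * C ℓ k := by
    intro ℓ
    calc t ℓ = ∑ j, ∑ k, (starRingEnd ℂ) (a j) * B j k * C ℓ k := by
          simp only [ht]
          refine Finset.sum_congr rfl fun j _ => ?_
          simp only [hg]
          rw [Finset.mul_sum]
          exact Finset.sum_congr rfl fun k _ => by ring
      _ = ∑ k, ∑ j, (starRingEnd ℂ) (a j) * B j k * C ℓ k := Finset.sum_comm
      _ = ∑ k, s k * C ℓ k := by
          refine Finset.sum_congr rfl fun k _ => ?_
          simp only [hs]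
          rw [Finset.sum_mul]
  -- membership of h in W
  have hmem : ∀ ℓ, h ℓ ∈ W := by
    intro ℓ
    have hrep : h ℓ = ∑ k, C ℓ k • w k := by
      ext j
      rw [WithLp.ofLp_sum, Finset.sum_apply]
      simp only [PiLp.smul_apply, smul_eq_mul, hh, hw, PiLp.toLp_apply]
      calc (A2r : ℂ) * g ℓ j - t ℓ * a j
          = (A2r : ℂ) * (∑ k, B j k * C ℓ k) - (∑ k, s k * C ℓ k) * a j := by
            rw [htl ℓ]
        _ = ∑ k, ((A2r : ℂ) * (B j k * C ℓ k) - s k * C ℓ k * a j) := by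
            rw [Finset.mul_sum, Finset.sum_mul, ← Finset.sum_sub_distrib]
        _ = ∑ k, C ℓ k * ((A2r : ℂ) * B j k - s k * a j) := by
            exact Finset.sum_congr rfl fun k _ => by ring
    rw [hrep]
    exact Submodule.sum_mem _ fun k _ =>
      Submodule.smul_mem _ _ (Submodule.subset_span ⟨k, rfl⟩)
  -- LHS identity
  have hS : (∑ j : Fin p, ∑ ℓ : Fin p, ∑ k : Fin n,
        (starRingEnd ℂ) (a j) * (a j * B ℓ k - a ℓ * B j k) * C ℓ k)
      = ∑ ℓ, h ℓ ℓ := by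
    rw [Finset.sum_comm]
    refine Finset.sum_congr rfl fun ℓ _ => ?_
    calc ∑ j : Fin p, ∑ k : Fin n, (starRingEnd ℂ) (a j) * (a j * B ℓ k - a ℓ * B j k) * C ℓ k
        = ∑ j, ((starRingEnd ℂ) (a j) * a j * g ℓ ℓ
            - a ℓ * ((starRingEnd ℂ) (a j) * g ℓ j)) := by
          refine Finset.sum_congr rfl fun j _ => ?_
          simp only [hg]
          rw [Finset.mul_sum, Finset.mul_sum, Finset.mul_sum, ← Finset.sum_sub_distrib]
          exact Finset.sum_congr rfl fun k _ => by ring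
      _ = (∑ j, (starRingEnd ℂ) (a j) * a j) * g ℓ ℓ
            - a ℓ * (∑ j, (starRingEnd ℂ) (a j) * g ℓ j) := by
          rw [Finset.sum_sub_distrib, ← Finset.sum_mul, ← Finset.mul_sum]
      _ = h ℓ ℓ := by
          rw [hA2]
          simp only [hh, ht, PiLp.toLp_apply]
          ring
  -- RHS inner sums
  have hv : ∀ (ℓ j m : Fin p), (∑ k, (a m * B j k - a j * B m k) * C ℓ k)
      = a m * g ℓ j - a j * g ℓ m := by
    intro ℓ j m
    simp only [hg]
    rw [Finset.mul_sum, Finset.mul_sum, ← Finset.sum_sub_distrib]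
    exact Finset.sum_congr rfl fun k _ => by ring
  -- norm of h ℓ
  have hnorm : ∀ ℓ, ‖h ℓ‖ ^ 2
      = A2r * (A2r * (∑ j, Complex.normSq (g ℓ j)) - Complex.normSq (t ℓ)) := by
    intro ℓ
    have hns : ‖h ℓ‖ ^ 2 = ∑ j, Complex.normSq (h ℓ j) := by
      rw [EuclideanSpace.norm_eq, Real.sq_sqrt (by positivity)]
      exact Finset.sum_congr rfl fun j _ => by rw [Complex.sq_norm]
    rw [hns]
    have hgt : (∑ j, g ℓ j * (starRingEnd ℂ) (a j)) = t ℓ := by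
      simp only [ht]
      exact Finset.sum_congr rfl fun j _ => by ring
    calc ∑ j, Complex.normSq (h ℓ j)
        = ∑ j, (A2r * A2r * Complex.normSq (g ℓ j)
            + Complex.normSq (t ℓ) * Complex.normSq (a j)
            - 2 * (A2r * ((g ℓ j * (starRingEnd ℂ) (a j)) * (starRingEnd ℂ) (t ℓ)).re)) := by
          refine Finset.sum_congr rfl fun j _ => ?_
          simp only [hh, PiLp.toLp_apply]
          rw [Complex.normSq_sub, Complex.normSq_mul, Complex.normSq_mul,
            Complex.normSq_ofReal]
          have h2 : ((A2r : ℂ) * g ℓ j) * (starRingEnd ℂ) (t ℓ * a j)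
              = (A2r : ℂ) * ((g ℓ j * (starRingEnd ℂ) (a j)) * (starRingEnd ℂ) (t ℓ)) := by
            simp only [map_mul]
            ring
          rw [h2, Complex.re_ofReal_mul]
      _ = A2r * A2r * (∑ j, Complex.normSq (g ℓ j)) + Complex.normSq (t ℓ) * A2r
            - 2 * (A2r * (((∑ j, g ℓ j * (starRingEnd ℂ) (a j)) * (starRingEnd ℂ) (t ℓ))).re) := by
          rw [Finset.sum_sub_distrib, Finset.sum_add_distrib, ← Finset.mul_sum, ← Finset.mul_sum,
            ← Finset.mul_sum, ← Finset.mul_sum, ← Complex.re_sum, ← Finset.sum_mul, hA2r]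
      _ = A2r * (A2r * (∑ j, Complex.normSq (g ℓ j)) - Complex.normSq (t ℓ)) := by
          rw [hgt, Complex.mul_conj, Complex.ofReal_re]
          ring
  -- rank bounds
  have hdn : Module.finrank ℂ W ≤ n := by
    have := finrank_range_le_card (R := ℂ) w
    simpa [Set.finrank, hW] using this
  have hdp : Module.finrank ℂ W ≤ p - 1 := by
    set a' : EuclideanSpace ℂ (Fin p) := WithLp.toLp 2 a with ha'
    have ha0 : a' ≠ 0 := fun h0 => ha (funext fun j => by simpa using congrArg (fun x : EuclideanSpace ℂ (Fin p) => x j) h0)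
    have horth : ∀ k, w k ∈ (ℂ ∙ a')ᗮ := by
      intro k
      rw [Submodule.mem_orthogonal_singleton_iff_inner_right]
      have hi : ⟪a', w k⟫ = ∑ j, (starRingEnd ℂ) (a j) * ((A2r : ℂ) * B j k - s k * a j) := by
        simp only [PiLp.inner_apply, RCLike.inner_apply, hw, ha', PiLp.toLp_apply]
        exact Finset.sum_congr rfl fun j _ => mul_comm _ _
      rw [hi]
      calc ∑ j, (starRingEnd ℂ) (a j) * ((A2r : ℂ) * B j k - s k * a j)
          = ∑ j, ((A2r : ℂ) * ((starRingEnd ℂ) (a j) * B j k)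
              - s k * ((starRingEnd ℂ) (a j) * a j)) :=
            Finset.sum_congr rfl fun j _ => by ring
        _ = (A2r : ℂ) * s k - s k * (A2r : ℂ) := by
            rw [Finset.sum_sub_distrib, ← Finset.mul_sum, ← Finset.mul_sum, hA2]
        _ = 0 := by ring
    have hWle : W ≤ (ℂ ∙ a')ᗮ := by
      rw [hW, Submodule.span_le]
      rintro x ⟨k, rfl⟩
      exact horth k
    have hfr : Module.finrank ℂ (ℂ ∙ a') + Module.finrank ℂ ((ℂ ∙ a')ᗮ : Submodule ℂ _) = p := by
      rw [Submodule.finrank_add_finrank_orthogonal, finrank_euclideanSpace, Fintype.card_fin]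
    have h1' : Module.finrank ℂ (ℂ ∙ a') = 1 := finrank_span_singleton ha0
    have := Submodule.finrank_mono hWle
    omega
  have hq : (Module.finrank ℂ W : ℝ) ≤ ((min n (p - 1) : ℕ) : ℝ) := by
    exact_mod_cast le_min hdn hdp
  -- assembly
  have habs2 : (∑ j : Fin p, ‖a j‖ ^ 2) = A2r := by
    rw [hA2r]
    exact Finset.sum_congr rfl fun j _ => Complex.sq_norm _
  rw [hS, habs2]
  calc ‖∑ ℓ, h ℓ ℓ‖ ^ 2
      ≤ (Module.finrank ℂ W : ℝ) * ∑ ℓ, ‖h ℓ‖ ^ 2 := skoda_key W h hmem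
    _ ≤ ((min n (p - 1) : ℕ) : ℝ) * ∑ ℓ, ‖h ℓ‖ ^ 2 := by
        refine mul_le_mul_of_nonneg_right hq ?_
        positivity
    _ = ((min n (p - 1) : ℕ) : ℝ) * A2r *
        ∑ ℓ : Fin p, ∑ j : Fin p, ∑ m ∈ Finset.univ.filter (fun m : Fin p => m < j),
          (‖∑ k : Fin n, (a m * B j k - a j * B m k) * C ℓ k‖) ^ 2 := by
        rw [mul_assoc]
        congr 1
        rw [Finset.mul_sum]
        refine Finset.sum_congr rfl fun ℓ _ => ?_
        rw [hnorm ℓ]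
        congr 1
        rw [hA2r]
        simp only [ht]
        rw [← lagrange_identity a (g ℓ)]
        refine Finset.sum_congr rfl fun j _ => ?_
        refine Finset.sum_congr rfl fun m _ => ?_
        rw [hv ℓ j m, Complex.sq_norm]
end

section
/- Wedge-product form of the Cauchy-Schwarz inequality for more general tensors (Proposition 7.1 / Remark 7.2): for any a = (a_1,…,a_p) ∈ ℂ^p and any complex p×n matrices B = (b_{ℓ,k}) and C = (c_{ℓ,k}), with q = min(n, p−1), one has |∑_{1≤j<ℓ≤p} ∑_{k=1}^{n} (a_j b_{ℓ,k} − a_ℓ b_{j,k}) · conj(a_j c_{ℓ,k} − a_ℓ c_{j,k})|² ≤ q · (∑_{j=1}^{p} |a_j|²) · ∑_{ℓ=1}^{p} ∑_{1≤m<j≤p} |∑_{k=1}^{n} (a_m b_{j,k} − a_j b_{m,k}) · conj(c_{ℓ,k})|². -/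
open Finset Matrix Module

local notation "conj'" => starRingEnd ℂ

section Aux
variable {p : ℕ}


lemma E_sum_apply {ι : Type*} (s : Finset ι) (f : ι → EuclideanSpace ℂ (Fin p)) (j : Fin p) :
    (∑ i ∈ s, f i) j = ∑ i ∈ s, f i j := by rw [WithLp.ofLp_sum, Finset.sum_apply]

lemma E_smul_apply (c : ℂ) (x : EuclideanSpace ℂ (Fin p)) (j : Fin p) : (c • x) j = c * x j := rfl

lemma inner_eq (x y : EuclideanSpace ℂ (Fin p)) :
    (inner ℂ x y : ℂ) = ∑ j, (starRingEnd ℂ) (x j) * y j := by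
  simp [PiLp.inner_apply, RCLike.inner_apply, mul_comm]

lemma toEL_apply (W : Matrix (Fin p) (Fin p) ℂ) (x : EuclideanSpace ℂ (Fin p)) (j : Fin p) :
    (Matrix.toEuclideanLin W x) j = ∑ m, W j m * x m := by
  rw [Matrix.toEuclideanLin_apply]
  rfl

lemma core {q : ℕ} (W : Matrix (Fin p) (Fin p) ℂ)
    (h : Module.finrank ℂ (LinearMap.range (Matrix.toEuclideanLin W)) ≤ q) :
    ‖W.trace‖ ^ 2 ≤ (q : ℝ) * ∑ j, ∑ ℓ, ‖(W j ℓ)‖ ^ 2 := by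
  set V := LinearMap.range (Matrix.toEuclideanLin W) with hV
  set r := Module.finrank ℂ V with hr
  let b := stdOrthonormalBasis ℂ V
  set v : Fin r → EuclideanSpace ℂ (Fin p) := fun i => (b i : EuclideanSpace ℂ (Fin p)) with hv
  have hon : Orthonormal ℂ v := by
    have := b.orthonormal
    rw [orthonormal_iff_ite] at this ⊢
    intro i j
    simpa [Submodule.coe_inner] using this i j
  have recon : ∀ x : EuclideanSpace ℂ (Fin p), x ∈ V → ∀ ℓ,
      ∑ i, (inner ℂ (v i) x : ℂ) * v i ℓ = x ℓ := by
    intro x hx ℓ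
    have h1 := b.sum_repr ⟨x, hx⟩
    show _ = ((⟨x, hx⟩ : V) : EuclideanSpace ℂ (Fin p)) ℓ
    conv_rhs => rw [← h1]
    rw [Submodule.coe_sum, E_sum_apply]
    refine Finset.sum_congr rfl fun i _ => ?_
    rw [Submodule.coe_smul, E_smul_apply, b.repr_apply_apply, Submodule.coe_inner]
  have colmem : ∀ ℓ : Fin p, (Matrix.toEuclideanLin W (EuclideanSpace.single ℓ 1)) ∈ V :=
    fun ℓ => LinearMap.mem_range_self _ _
  have colapp : ∀ ℓ j : Fin p, (Matrix.toEuclideanLin W (EuclideanSpace.single ℓ 1)) j = W j ℓ := by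
    intro ℓ j
    rw [toEL_apply]
    simp [EuclideanSpace.single, EuclideanSpace.single_apply, Pi.single_apply, mul_ite]
  have htr : W.trace = ∑ i, (inner ℂ (v i) (Matrix.toEuclideanLin W (v i)) : ℂ) := by
    have step : W.trace = ∑ ℓ, ∑ i, (inner ℂ (v i) (Matrix.toEuclideanLin W (EuclideanSpace.single ℓ 1)) : ℂ) * v i ℓ := by
      rw [Matrix.trace]
      refine Finset.sum_congr rfl fun ℓ _ => ?_
      rw [recon _ (colmem ℓ) ℓ, colapp]
      rfl
    rw [step, Finset.sum_comm]
    refine Finset.sum_congr rfl fun i _ => ?_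
    simp only [inner_eq, toEL_apply, colapp]
    simp only [Finset.sum_mul, Finset.mul_sum]
    rw [Finset.sum_comm]
    exact Finset.sum_congr rfl fun m _ => Finset.sum_congr rfl fun ℓ _ => by ring
  -- Bessel
  have bessel : ∑ i, ∑ j, ‖((Matrix.toEuclideanLin W (v i)) j)‖ ^ 2
      ≤ ∑ j, ∑ m, ‖(W j m)‖ ^ 2 := by
    rw [Finset.sum_comm]
    refine Finset.sum_le_sum fun j _ => ?_
    set w : EuclideanSpace ℂ (Fin p) := WithLp.toLp 2 (fun m => (starRingEnd ℂ) (W j m)) with hw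
    have h1 : ∀ i, ‖((Matrix.toEuclideanLin W (v i)) j)‖ ^ 2
        = ‖(inner ℂ (v i) w : ℂ)‖ ^ 2 := by
      intro i
      rw [← norm_inner_symm, inner_eq, toEL_apply]
      congr 2
      exact Finset.sum_congr rfl fun m _ => by simp [hw]
    calc ∑ i, ‖((Matrix.toEuclideanLin W (v i)) j)‖ ^ 2
        = ∑ i, ‖(inner ℂ (v i) w : ℂ)‖ ^ 2 := Finset.sum_congr rfl fun i _ => h1 i
      _ ≤ ‖w‖ ^ 2 := hon.sum_inner_products_le w
      _ = ∑ m, ‖(W j m)‖ ^ 2 := by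
          rw [PiLp.norm_sq_eq_of_L2]
          exact Finset.sum_congr rfl fun m _ => by simp [hw]
  -- assemble
  have habs : ‖W.trace‖ ≤ ∑ i, ‖(inner ℂ (v i) (Matrix.toEuclideanLin W (v i)) : ℂ)‖ := by
    rw [htr]; exact norm_sum_le _ _
  have hsq : ‖W.trace‖ ^ 2 ≤ (r : ℝ) * ∑ i, ‖(inner ℂ (v i) (Matrix.toEuclideanLin W (v i)) : ℂ)‖ ^ 2 := by
    calc ‖W.trace‖ ^ 2
        ≤ (∑ i, ‖(inner ℂ (v i) (Matrix.toEuclideanLin W (v i)) : ℂ)‖) ^ 2 := by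
          apply pow_le_pow_left₀ (norm_nonneg _) habs
      _ ≤ (r : ℝ) * ∑ i, ‖(inner ℂ (v i) (Matrix.toEuclideanLin W (v i)) : ℂ)‖ ^ 2 := by
          simpa using sq_sum_le_card_mul_sum_sq (s := Finset.univ)
            (f := fun i => ‖(inner ℂ (v i) (Matrix.toEuclideanLin W (v i)) : ℂ)‖)
  have hterm : ∀ i, ‖(inner ℂ (v i) (Matrix.toEuclideanLin W (v i)) : ℂ)‖ ^ 2
      ≤ ∑ j, ‖((Matrix.toEuclideanLin W (v i)) j)‖ ^ 2 := by
    intro i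
    have h2 : ‖(inner ℂ (v i) (Matrix.toEuclideanLin W (v i)) : ℂ)‖ ≤ ‖Matrix.toEuclideanLin W (v i)‖ := by
      have := norm_inner_le_norm (𝕜 := ℂ) (v i) (Matrix.toEuclideanLin W (v i))
      rwa [hon.1 i, one_mul] at this
    calc ‖(inner ℂ (v i) (Matrix.toEuclideanLin W (v i)) : ℂ)‖ ^ 2
        ≤ ‖Matrix.toEuclideanLin W (v i)‖ ^ 2 := by
          exact pow_le_pow_left₀ (norm_nonneg _) h2 2
      _ = ∑ j, ‖((Matrix.toEuclideanLin W (v i)) j)‖ ^ 2 := by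
          rw [PiLp.norm_sq_eq_of_L2]
  calc ‖W.trace‖ ^ 2
      ≤ (r : ℝ) * ∑ i, ‖(inner ℂ (v i) (Matrix.toEuclideanLin W (v i)) : ℂ)‖ ^ 2 := hsq
    _ ≤ (r : ℝ) * ∑ j, ∑ m, ‖(W j m)‖ ^ 2 := by
        apply mul_le_mul_of_nonneg_left _ (Nat.cast_nonneg r)
        exact le_trans (Finset.sum_le_sum fun i _ => hterm i) bessel
    _ ≤ (q : ℝ) * ∑ j, ∑ m, ‖(W j m)‖ ^ 2 := by
        apply mul_le_mul_of_nonneg_right (Nat.cast_le.mpr h)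
        positivity

end Aux

lemma toEL_apply' {m n : ℕ} (W : Matrix (Fin m) (Fin n) ℂ) (x : EuclideanSpace ℂ (Fin n)) (j : Fin m) :
    (Matrix.toEuclideanLin W x) j = ∑ k, W j k * x k := by
  rw [Matrix.toEuclideanLin_apply]
  rfl

lemma toEL_mul {l m n : ℕ} (M : Matrix (Fin l) (Fin m) ℂ) (N : Matrix (Fin m) (Fin n) ℂ) :
    Matrix.toEuclideanLin (M * N) = (Matrix.toEuclideanLin M).comp (Matrix.toEuclideanLin N) := by
  apply LinearMap.ext
  intro x
  ext j
  rw [LinearMap.comp_apply, toEL_apply', toEL_apply']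
  simp only [Matrix.mul_apply, Finset.sum_mul]
  rw [Finset.sum_comm]
  refine Finset.sum_congr rfl fun k _ => ?_
  rw [toEL_apply', Finset.mul_sum]
  exact Finset.sum_congr rfl fun i _ => by ring

lemma rank_bound {p n : ℕ} (hp : 2 ≤ p) (P : Matrix (Fin p) (Fin p) ℂ) (Z : Matrix (Fin p) (Fin p) ℂ)
    (B C : Matrix (Fin p) (Fin n) ℂ) (hZ : Z = B * Cᴴ)
    (a : EuclideanSpace ℂ (Fin p)) (ha : a ≠ 0) (hPa : Matrix.toEuclideanLin P a = 0) :
    Module.finrank ℂ (LinearMap.range (Matrix.toEuclideanLin (P * Z))) ≤ min n (p - 1) := by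
  refine le_min ?_ ?_
  · -- ≤ n
    have h1 : P * Z = (P * B) * Cᴴ := by rw [hZ, Matrix.mul_assoc]
    rw [h1, toEL_mul, LinearMap.range_comp]
    calc finrank ℂ (Submodule.map (Matrix.toEuclideanLin (P * B)) (LinearMap.range (Matrix.toEuclideanLin Cᴴ)))
        ≤ finrank ℂ (LinearMap.range (Matrix.toEuclideanLin Cᴴ)) := Submodule.finrank_map_le _ _
      _ ≤ finrank ℂ (EuclideanSpace ℂ (Fin n)) := Submodule.finrank_le _
      _ = n := finrank_euclideanSpace_fin
  · -- ≤ p - 1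
    rw [toEL_mul]
    have h2 : finrank ℂ (LinearMap.range ((Matrix.toEuclideanLin P).comp (Matrix.toEuclideanLin Z)))
        ≤ finrank ℂ (LinearMap.range (Matrix.toEuclideanLin P)) :=
      Submodule.finrank_mono (LinearMap.range_comp_le_range _ _)
    refine h2.trans ?_
    have h3 := (Matrix.toEuclideanLin P).finrank_range_add_finrank_ker
    rw [finrank_euclideanSpace_fin] at h3
    have h4 : 0 < finrank ℂ (LinearMap.ker (Matrix.toEuclideanLin P)) := by
      rw [Module.finrank_pos_iff_exists_ne_zero]
      exact ⟨⟨a, LinearMap.mem_ker.mpr hPa⟩, by simpa [Submodule.mk_eq_zero] using ha⟩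
    omega


lemma sum_lt_pairs {p : ℕ} (g : Fin p → Fin p → ℂ) :
    ∑ ℓ : Fin p, ∑ j ∈ Finset.univ.filter (fun j : Fin p => j < ℓ), (g j ℓ + g ℓ j)
      = (∑ ℓ : Fin p, ∑ j : Fin p, g j ℓ) - ∑ j : Fin p, g j j := by
  have swap : ∑ ℓ : Fin p, ∑ j : Fin p, (if j < ℓ then g ℓ j else 0)
      = ∑ ℓ : Fin p, ∑ j : Fin p, (if ℓ < j then g j ℓ else 0) := Finset.sum_comm
  have diag : ∑ j : Fin p, g j j = ∑ ℓ : Fin p, ∑ j : Fin p, (if j = ℓ then g j ℓ else 0) := by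
    simp
  calc ∑ ℓ : Fin p, ∑ j ∈ Finset.univ.filter (fun j : Fin p => j < ℓ), (g j ℓ + g ℓ j)
      = ∑ ℓ : Fin p, ∑ j : Fin p, ((if j < ℓ then g j ℓ else 0) + (if j < ℓ then g ℓ j else 0)) := by
        simp [Finset.sum_filter, ite_add_ite]
    _ = (∑ ℓ : Fin p, ∑ j : Fin p, g j ℓ) - ∑ j : Fin p, g j j := by
        rw [eq_sub_iff_add_eq, diag]
        simp only [Finset.sum_add_distrib] at *
        rw [swap]
        rw [← Finset.sum_add_distrib, ← Finset.sum_add_distrib]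
        refine Finset.sum_congr rfl fun ℓ _ => ?_
        rw [← Finset.sum_add_distrib, ← Finset.sum_add_distrib]
        refine Finset.sum_congr rfl fun j _ => ?_
        rcases lt_trichotomy j ℓ with h | h | h
        · simp [h, lt_asymm h, h.ne]
        · simp [h]
        · simp [h, lt_asymm h, h.ne']

lemma dsum1 {p : ℕ} (f g : Fin p → ℂ) :
    ∑ j : Fin p, ∑ m : Fin p, f m * g j = (∑ m, f m) * (∑ j, g j) := by
  simp_rw [← Finset.sum_mul]
  rw [← Finset.mul_sum, mul_comm]

lemma dsum2 {p : ℕ} (f g : Fin p → ℂ) :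
    ∑ j : Fin p, ∑ m : Fin p, g j * f m = (∑ m, f m) * (∑ j, g j) := by
  simp_rw [← Finset.mul_sum]
  rw [← Finset.sum_mul, mul_comm]

lemma lagrange {p : ℕ} (u w : Fin p → ℂ) :
    ∑ j : Fin p, ∑ m ∈ Finset.univ.filter (fun m : Fin p => m < j),
        ((u m * w j - u j * w m) * conj' (u m * w j - u j * w m))
      = (∑ m, conj' (u m) * u m) * (∑ m, conj' (w m) * w m)
        - (∑ m, conj' (u m) * w m) * conj' (∑ m, conj' (u m) * w m) := by
  set h : Fin p → Fin p → ℂ := fun m j => (u m * w j - u j * w m) * conj' (u m * w j - u j * w m)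
    with hh
  have hsymm : ∀ m j, h m j = h j m := by
    intro m j
    simp only [hh, map_sub, _root_.map_mul]
    ring
  have diag0 : ∑ j : Fin p, h j j = 0 := by
    apply Finset.sum_eq_zero; intro j _; simp [hh]
  have hconj : (∑ m : Fin p, u m * conj' (w m)) = conj' (∑ m : Fin p, conj' (u m) * w m) := by
    rw [map_sum]
    exact Finset.sum_congr rfl fun m _ => by simp [_root_.map_mul, mul_comm]
  have expand : ∑ j : Fin p, ∑ m : Fin p, h m j
      = 2 * ((∑ m, conj' (u m) * u m) * (∑ m, conj' (w m) * w m)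
        - (∑ m, conj' (u m) * w m) * conj' (∑ m, conj' (u m) * w m)) := by
    have e1 : ∀ j : Fin p, ∑ m : Fin p, h m j
        = ∑ m : Fin p, ((u m * conj' (u m)) * (w j * conj' (w j))
          - (u m * conj' (w m)) * (conj' (u j) * w j)
          - (conj' (u m) * w m) * (u j * conj' (w j))
          + (w m * conj' (w m)) * (u j * conj' (u j))) := by
      intro j
      refine Finset.sum_congr rfl fun m _ => ?_
      simp only [hh, map_sub, _root_.map_mul]
      ring
    simp only [e1, Finset.sum_add_distrib, Finset.sum_sub_distrib]
    rw [dsum1, dsum1, dsum1, dsum1, hconj]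
    have c1 : (∑ m : Fin p, u m * conj' (u m)) = ∑ m, conj' (u m) * u m :=
      Finset.sum_congr rfl fun m _ => mul_comm _ _
    have c2 : (∑ m : Fin p, w m * conj' (w m)) = ∑ m, conj' (w m) * w m :=
      Finset.sum_congr rfl fun m _ => mul_comm _ _
    have c3 : (∑ j : Fin p, conj' (u j) * w j) = ∑ m, conj' (u m) * w m := rfl
    have c4 : (∑ j : Fin p, u j * conj' (w j)) = conj' (∑ m, conj' (u m) * w m) := hconj
    rw [c1, c2]
    ring
  apply mul_left_cancel₀ (two_ne_zero (α := ℂ))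
  calc 2 * ∑ j : Fin p, ∑ m ∈ Finset.univ.filter (fun m : Fin p => m < j), h m j
      = ∑ j : Fin p, ∑ m ∈ Finset.univ.filter (fun m : Fin p => m < j), (h m j + h j m) := by
        rw [Finset.mul_sum]
        refine Finset.sum_congr rfl fun j _ => ?_
        rw [Finset.mul_sum]
        exact Finset.sum_congr rfl fun m _ => by rw [← hsymm]; ring
    _ = (∑ j : Fin p, ∑ m : Fin p, h m j) - ∑ j : Fin p, h j j := sum_lt_pairs h
    _ = 2 * _ := by rw [diag0, sub_zero, expand]

/-- Wedge-product form of the Cauchy-Schwarz inequality for more general tensors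
(Proposition 7.1 / Remark 7.2): for `a ∈ ℂ^p` and complex `p × n` matrices `B`, `C`,
with `q = min(n, p−1)`,
`|∑_{j<ℓ} ∑_k (a_j b_{ℓ,k} − a_ℓ b_{j,k}) conj(a_j c_{ℓ,k} − a_ℓ c_{j,k})|²
  ≤ q (∑_j |a_j|²) ∑_ℓ ∑_{m<j} |∑_k (a_m b_{j,k} − a_j b_{m,k}) conj(c_{ℓ,k})|²`. -/
theorem stmt_5 (p n : ℕ) (hp : 2 ≤ p) (hn : 0 < n)
    (a : Fin p → ℂ) (B C : Matrix (Fin p) (Fin n) ℂ) :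
    ‖(∑ ℓ : Fin p, ∑ j ∈ Finset.univ.filter (fun j : Fin p => j < ℓ),
        ∑ k : Fin n, (a j * B ℓ k - a ℓ * B j k) *
          (starRingEnd ℂ) (a j * C ℓ k - a ℓ * C j k))‖ ^ 2 ≤
      ((min n (p - 1) : ℕ) : ℝ) * (∑ j : Fin p, ‖a j‖ ^ 2) *
        ∑ ℓ : Fin p, ∑ j : Fin p, ∑ m ∈ Finset.univ.filter (fun m : Fin p => m < j),
          ‖(∑ k : Fin n,
            (a m * B j k - a j * B m k) * (starRingEnd ℂ) (C ℓ k))‖ ^ 2 := by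
  classical
  by_cases ha : a = 0
  · simp [ha]
  set q : ℕ := min n (p - 1) with hqdef
  set Z := B * Cᴴ with hZdef
  have Zval : ∀ j ℓ, Z j ℓ = ∑ k, B j k * conj' (C ℓ k) := fun j ℓ => by
    simp [hZdef, Matrix.mul_apply, Matrix.conjTranspose_apply]
  set t : ℝ := ∑ j, ‖(a j)‖ ^ 2 with htdef
  have ht : 0 < t := by
    obtain ⟨j0, hj0⟩ := Function.ne_iff.mp ha
    exact Finset.sum_pos' (fun j _ => by positivity) ⟨j0, Finset.mem_univ _, pow_pos (norm_pos_iff.mpr (by simpa using hj0)) 2⟩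
  have htne : ((t : ℝ) : ℂ) ≠ 0 := Complex.ofReal_ne_zero.mpr ht.ne'
  have tC : ((t : ℝ) : ℂ) = ∑ j, conj' (a j) * a j := by
    rw [htdef, Complex.ofReal_sum]
    refine Finset.sum_congr rfl fun j _ => ?_
    rw [Complex.sq_norm, ← Complex.mul_conj, mul_comm]
  set s : Fin p → ℂ := fun ℓ => ∑ m, conj' (a m) * Z m ℓ with hsdef
  set P : Matrix (Fin p) (Fin p) ℂ :=
    Matrix.of (fun j ℓ => (if j = ℓ then (1:ℂ) else 0) - ((t:ℝ):ℂ)⁻¹ * (a j * conj' (a ℓ)))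
    with hPdef
  set W := P * Z with hWdef
  have Wval : ∀ j ℓ, W j ℓ = Z j ℓ - ((t:ℝ):ℂ)⁻¹ * a j * s ℓ := by
    intro j ℓ
    rw [hWdef, Matrix.mul_apply]
    have e : ∀ m, P j m * Z m ℓ
        = (if j = m then Z m ℓ else 0) - ((t:ℝ):ℂ)⁻¹ * a j * (conj' (a m) * Z m ℓ) := by
      intro m
      rw [hPdef]
      simp only [Matrix.of_apply]
      split <;> ring
    rw [Finset.sum_congr rfl fun m _ => e m, Finset.sum_sub_distrib, Finset.sum_ite_eq,
      if_pos (Finset.mem_univ j), ← Finset.mul_sum, hsdef]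
  have traceW : ((t:ℝ):ℂ) * W.trace = ((t:ℝ):ℂ) * Z.trace - ∑ ℓ, a ℓ * s ℓ := by
    have h1 : W.trace = Z.trace - ((t:ℝ):ℂ)⁻¹ * ∑ ℓ, a ℓ * s ℓ := by
      simp only [Matrix.trace, Matrix.diag]
      rw [Finset.sum_congr rfl fun ℓ _ => Wval ℓ ℓ, Finset.sum_sub_distrib, Finset.mul_sum]
      congr 1
      exact Finset.sum_congr rfl fun ℓ _ => by ring
    rw [h1, mul_sub, ← mul_assoc, mul_inv_cancel₀ htne, one_mul]
  have Sval : (∑ ℓ : Fin p, ∑ j ∈ Finset.univ.filter (fun j : Fin p => j < ℓ),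
        ∑ k : Fin n, (a j * B ℓ k - a ℓ * B j k) * conj' (a j * C ℓ k - a ℓ * C j k))
      = ((t:ℝ):ℂ) * Z.trace - ∑ ℓ, a ℓ * s ℓ := by
    set g : Fin p → Fin p → ℂ := fun j ℓ => conj' (a j) * a j * Z ℓ ℓ - conj' (a ℓ) * a j * Z ℓ j
      with hg
    have pair : ∀ ℓ j : Fin p, (∑ k, (a j * B ℓ k - a ℓ * B j k) * conj' (a j * C ℓ k - a ℓ * C j k))
        = g j ℓ + g ℓ j := by
      intro ℓ j
      have e : ∀ k, (a j * B ℓ k - a ℓ * B j k) * conj' (a j * C ℓ k - a ℓ * C j k)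
          = conj' (a j) * a j * (B ℓ k * conj' (C ℓ k)) - conj' (a ℓ) * a j * (B ℓ k * conj' (C j k))
            - conj' (a j) * a ℓ * (B j k * conj' (C ℓ k))
            + conj' (a ℓ) * a ℓ * (B j k * conj' (C j k)) := by
        intro k
        simp only [map_sub, _root_.map_mul]
        ring
      rw [Finset.sum_congr rfl fun k _ => e k]
      simp only [Finset.sum_add_distrib, Finset.sum_sub_distrib, ← Finset.mul_sum]
      rw [hg]
      simp only [Zval]
      ring
    rw [Finset.sum_congr rfl fun ℓ _ => Finset.sum_congr rfl fun j _ => pair ℓ j, sum_lt_pairs g]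
    have d0 : ∑ j : Fin p, g j j = 0 := Finset.sum_eq_zero fun j _ => by rw [hg]; ring
    rw [d0, sub_zero, hg]
    simp only [Finset.sum_sub_distrib]
    congr 1
    · rw [dsum1 (fun j => conj' (a j) * a j) (fun ℓ => Z ℓ ℓ), tC]
      rfl
    · rw [Finset.sum_comm]
      refine Finset.sum_congr rfl fun ℓ _ => ?_
      rw [hsdef, Finset.mul_sum]
      exact Finset.sum_congr rfl fun m _ => by ring
  have hconjZ : ∀ ℓ, ∑ j, a j * conj' (Z j ℓ) = conj' (s ℓ) := by
    intro ℓ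
    rw [hsdef, map_sum]
    exact Finset.sum_congr rfl fun m _ => by simp [_root_.map_mul]
  have cplx : ∀ ℓ, ∑ j, (W j ℓ * conj' (W j ℓ))
      = ∑ j, (Z j ℓ * conj' (Z j ℓ)) - ((t:ℝ):ℂ)⁻¹ * (s ℓ * conj' (s ℓ)) := by
    intro ℓ
    have hct : ((t:ℝ):ℂ)⁻¹ * ((t:ℝ):ℂ) = 1 := inv_mul_cancel₀ htne
    have e : ∀ j, W j ℓ * conj' (W j ℓ)
        = Z j ℓ * conj' (Z j ℓ)
          - ((t:ℝ):ℂ)⁻¹ * (s ℓ * (a j * conj' (Z j ℓ)))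
          - ((t:ℝ):ℂ)⁻¹ * (conj' (s ℓ) * (conj' (a j) * Z j ℓ))
          + ((t:ℝ):ℂ)⁻¹ * ((t:ℝ):ℂ)⁻¹ * (s ℓ * conj' (s ℓ)) * (conj' (a j) * a j) := by
      intro j
      rw [Wval j ℓ]
      simp only [map_sub, _root_.map_mul, map_inv₀, Complex.conj_ofReal]
      ring
    rw [Finset.sum_congr rfl fun j _ => e j]
    simp only [Finset.sum_add_distrib, Finset.sum_sub_distrib, ← Finset.mul_sum]
    rw [hconjZ ℓ]
    have hss : (∑ j, conj' (a j) * Z j ℓ) = s ℓ := rfl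
    rw [hss, ← tC]
    linear_combination (((t:ℝ):ℂ)⁻¹ * (s ℓ * conj' (s ℓ))) * hct
  have Wcol : ∀ ℓ, (∑ j, ‖(W j ℓ)‖^2)
      = (∑ j, ‖(Z j ℓ)‖^2) - t⁻¹ * ‖(s ℓ)‖^2 := by
    intro ℓ
    have h1 := cplx ℓ
    simp only [Complex.mul_conj, ← Complex.ofReal_inv, ← Complex.ofReal_mul,
      ← Complex.ofReal_sum, ← Complex.ofReal_sub] at h1
    have h2 := Complex.ofReal_inj.mp h1
    simp only [Complex.sq_norm]
    exact h2
  have rinner : ∀ (ℓ j m : Fin p), (∑ k, (a m * B j k - a j * B m k) * conj' (C ℓ k))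
      = a m * Z j ℓ - a j * Z m ℓ := by
    intro ℓ j m
    simp only [Zval, sub_mul, Finset.sum_sub_distrib, Finset.mul_sum]
    congr 1 <;> exact Finset.sum_congr rfl fun k _ => by ring
  have rhsL : ∀ ℓ, (∑ j : Fin p, ∑ m ∈ Finset.univ.filter (fun m : Fin p => m < j),
        (‖(∑ k, (a m * B j k - a j * B m k) * conj' (C ℓ k))‖) ^ 2)
      = t * ∑ j, ‖(W j ℓ)‖^2 := by
    intro ℓ
    have lag := lagrange a (fun m => Z m ℓ)
    have hsl : (∑ m, conj' (a m) * Z m ℓ) = s ℓ := rfl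
    rw [hsl, ← tC] at lag
    have lag2 : (∑ j : Fin p, ∑ m ∈ Finset.univ.filter (fun m : Fin p => m < j),
          ((Complex.normSq (a m * Z j ℓ - a j * Z m ℓ) : ℝ) : ℂ))
        = ((t : ℝ) : ℂ) * (∑ m, ((Complex.normSq (Z m ℓ) : ℝ) : ℂ)) - ((Complex.normSq (s ℓ) : ℝ) : ℂ) := by
      calc (∑ j : Fin p, ∑ m ∈ Finset.univ.filter (fun m : Fin p => m < j),
            ((Complex.normSq (a m * Z j ℓ - a j * Z m ℓ) : ℝ) : ℂ))
          = ∑ j : Fin p, ∑ m ∈ Finset.univ.filter (fun m : Fin p => m < j),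
              ((a m * Z j ℓ - a j * Z m ℓ) * conj' (a m * Z j ℓ - a j * Z m ℓ)) := by
            refine Finset.sum_congr rfl fun j _ => Finset.sum_congr rfl fun m _ => ?_
            exact (Complex.mul_conj _).symm
        _ = ((t : ℝ) : ℂ) * (∑ m, conj' (Z m ℓ) * Z m ℓ) - s ℓ * conj' (s ℓ) := lag
        _ = _ := by
            congr 1
            · congr 1
              exact Finset.sum_congr rfl fun m _ => Complex.normSq_eq_conj_mul_self.symm
            · exact Complex.mul_conj _
    simp only [← Complex.ofReal_sum, ← Complex.ofReal_mul, ← Complex.ofReal_sub] at lag2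
    have lag3 := Complex.ofReal_inj.mp lag2
    calc (∑ j : Fin p, ∑ m ∈ Finset.univ.filter (fun m : Fin p => m < j),
          (‖(∑ k, (a m * B j k - a j * B m k) * conj' (C ℓ k))‖) ^ 2)
        = ∑ j : Fin p, ∑ m ∈ Finset.univ.filter (fun m : Fin p => m < j),
            Complex.normSq (a m * Z j ℓ - a j * Z m ℓ) := by
          refine Finset.sum_congr rfl fun j _ => Finset.sum_congr rfl fun m _ => ?_
          rw [rinner ℓ j m, Complex.sq_norm]
      _ = t * (∑ m, Complex.normSq (Z m ℓ)) - Complex.normSq (s ℓ) := lag3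
      _ = t * ∑ j, ‖(W j ℓ)‖^2 := by
          rw [Wcol ℓ]
          have : ∀ z : ℂ, Complex.normSq z = ‖z‖ ^ 2 := fun z => (Complex.sq_norm z).symm
          simp only [this]
          field_simp
  have aEne : (WithLp.toLp 2 a : EuclideanSpace ℂ (Fin p)) ≠ 0 := by simpa using ha
  have hPa : Matrix.toEuclideanLin P (WithLp.toLp 2 a : EuclideanSpace ℂ (Fin p)) = 0 := by
    ext j
    rw [toEL_apply']
    show (∑ m, P j m * a m) = (0 : ℂ)
    have e : ∀ m, P j m * a m
        = (if j = m then a m else 0) - ((t:ℝ):ℂ)⁻¹ * a j * (conj' (a m) * a m) := by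
      intro m
      rw [hPdef]
      simp only [Matrix.of_apply]
      split <;> ring
    rw [Finset.sum_congr rfl fun m _ => e m, Finset.sum_sub_distrib, Finset.sum_ite_eq,
      if_pos (Finset.mem_univ j), ← Finset.mul_sum, ← tC]
    have : ((t:ℝ):ℂ)⁻¹ * a j * ((t:ℝ):ℂ) = a j := by
      field_simp
    rw [this, sub_self]
  have hrank : Module.finrank ℂ (LinearMap.range (Matrix.toEuclideanLin W)) ≤ q := by
    rw [hWdef]
    exact rank_bound hp P Z B C hZdef _ aEne hPa
  have hcore := core W hrank
  have Seq : (∑ ℓ : Fin p, ∑ j ∈ Finset.univ.filter (fun j : Fin p => j < ℓ),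
        ∑ k : Fin n, (a j * B ℓ k - a ℓ * B j k) * conj' (a j * C ℓ k - a ℓ * C j k))
      = ((t:ℝ):ℂ) * W.trace := Sval.trans traceW.symm
  calc (‖(∑ ℓ : Fin p, ∑ j ∈ Finset.univ.filter (fun j : Fin p => j < ℓ),
        ∑ k : Fin n, (a j * B ℓ k - a ℓ * B j k) * conj' (a j * C ℓ k - a ℓ * C j k))‖) ^ 2
      = (‖(((t:ℝ):ℂ) * W.trace)‖) ^ 2 := by rw [Seq]
    _ = t ^ 2 * (‖W.trace‖) ^ 2 := by
        rw [norm_mul, Complex.norm_real, Real.norm_of_nonneg ht.le, mul_pow]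
    _ ≤ t ^ 2 * ((q : ℝ) * ∑ j, ∑ ℓ, ‖(W j ℓ)‖ ^ 2) := by
        exact mul_le_mul_of_nonneg_left hcore (by positivity)
    _ = (q : ℝ) * t * ∑ ℓ : Fin p, (t * ∑ j, ‖(W j ℓ)‖ ^ 2) := by
        rw [Finset.sum_comm (f := fun j ℓ => ‖(W j ℓ)‖ ^ 2), Finset.mul_sum]
        rw [Finset.mul_sum, Finset.mul_sum]
        exact Finset.sum_congr rfl fun ℓ _ => by ring
    _ = (q : ℝ) * t * ∑ ℓ : Fin p, ∑ j : Fin p, ∑ m ∈ Finset.univ.filter (fun m : Fin p => m < j),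
          (‖(∑ k : Fin n,
            (a m * B j k - a j * B m k) * conj' (C ℓ k))‖) ^ 2 := by
        congr 1
        exact Finset.sum_congr rfl fun ℓ _ => (rhsL ℓ).symm
end
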